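/- arXiv:1708.00475 — 5 statements merged into one kernel-verified Lean document; each statement's English description precedes it below -/
import Mathlib

section
/- Let $g, s \in \mathbb{R}^n$ with $s \neq 0$, $H \in \mathbb{R}^{n\times n}$ symmetric with $\|H\| \leq H_{max}$, $\lambda \geq 0$, and $\kappa_1 > 0$. Suppose that $g^T s + \tfrac12 s^T H s \leq 0$ and $s^T(g + (H+\lambda I)s) \leq \kappa_1 \|s\|^2$. Then $\lambda \leq 2\|g\|/\|s\| + \tfrac32 H_{max} + \kappa_1$. -/
open scoped InnerProductSpace

theorem stmt_0 {n : ℕ} (g s : EuclideanSpace ℝ (Fin n))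
    (H : EuclideanSpace ℝ (Fin n) →L[ℝ] EuclideanSpace ℝ (Fin n))
    (hH : IsSelfAdjoint H) (Hmax : ℝ) (hHmax : ‖H‖ ≤ Hmax)
    (lm κ₁ : ℝ) (hlam : 0 ≤ lm) (hκ₁ : 0 < κ₁) (hs : s ≠ 0)
    (h1 : ⟪g, s⟫_ℝ + (1/2) * ⟪s, H s⟫_ℝ ≤ 0)
    (h2 : ⟪s, g + (H s + lm • s)⟫_ℝ ≤ κ₁ * ‖s‖ ^ 2) :
    lm ≤ 2 * ‖g‖ / ‖s‖ + (3/2) * Hmax + κ₁ := by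
  have hns : 0 < ‖s‖ := norm_pos_iff.mpr hs
  have hHmax0 : 0 ≤ Hmax := le_trans (norm_nonneg H) hHmax
  have hHs : |⟪s, H s⟫_ℝ| ≤ Hmax * ‖s‖ ^ 2 := by
    calc |⟪s, H s⟫_ℝ| ≤ ‖s‖ * ‖H s‖ := abs_real_inner_le_norm s (H s)
    _ ≤ ‖s‖ * (‖H‖ * ‖s‖) := by
        gcongr; exact H.le_opNorm s
    _ ≤ Hmax * ‖s‖ ^ 2 := by nlinarith [hns.le]
  have hsg : |⟪s, g⟫_ℝ| ≤ ‖g‖ * ‖s‖ := by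
    calc |⟪s, g⟫_ℝ| ≤ ‖s‖ * ‖g‖ := abs_real_inner_le_norm s g
    _ = ‖g‖ * ‖s‖ := mul_comm _ _
  rw [inner_add_right, inner_add_right, real_inner_smul_right,
    real_inner_self_eq_norm_sq s] at h2
  have key : lm * ‖s‖ ^ 2 ≤ (κ₁ + Hmax) * ‖s‖ ^ 2 + ‖g‖ * ‖s‖ := by
    have h3 := abs_le.mp hHs
    have h4 := abs_le.mp hsg
    nlinarith
  have hdiv : lm ≤ κ₁ + Hmax + ‖g‖ / ‖s‖ := by
    rw [div_eq_mul_inv]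
    have := mul_le_mul_of_nonneg_right key (le_of_lt (inv_pos.mpr (pow_pos hns 2)))
    rw [mul_inv_cancel_right₀ (by positivity : (‖s‖:ℝ)^2 ≠ 0)] at this
    calc lm ≤ ((κ₁ + Hmax) * ‖s‖ ^ 2 + ‖g‖ * ‖s‖) * (‖s‖ ^ 2)⁻¹ := this
    _ = κ₁ + Hmax + ‖g‖ * ‖s‖⁻¹ := by field_simp
  have hg : 0 ≤ ‖g‖ / ‖s‖ := by positivity
  rw [div_eq_mul_inv] at hg hdiv ⊢
  linarith
end

section
/- Let $f : \mathbb{R}^n \to \mathbb{R}$ be twice continuously differentiable with Hessian Lipschitz constant $H_{Lip} > 0$ on the segment $[x, x+s]$, where $s \neq 0$. Let $g = \nabla f(x)$, $H = \nabla^2 f(x)$, and let $\lambda \geq 0$ and $\kappa_2, \eta > 0$. If $s^T(g + (H+\lambda I)s) \leq \tfrac12 s^T(H+\lambda I)s + \tfrac12 \kappa_2\|s\|^3$ and $\lambda \geq (H_{Lip} + \kappa_2 + 2\eta)\|s\|$, then $f(x) - f(x+s) \geq \eta \|s\|^3$. -/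
open scoped InnerProductSpace

set_option maxHeartbeats 1000000
set_option synthInstance.maxHeartbeats 200000

theorem stmt_3 {n : ℕ} (f : EuclideanSpace ℝ (Fin n) → ℝ)
    (x s : EuclideanSpace ℝ (Fin n)) (hs : s ≠ 0) (HLip lm κ₂ η : ℝ)
    (hHLip : 0 < HLip) (hlm : 0 ≤ lm) (hκ₂ : 0 < κ₂) (hη : 0 < η)
    (hf : ContDiff ℝ 2 f)
    (hlip : LipschitzOnWith HLip.toNNReal (fun y => fderiv ℝ (gradient f) y)
      (segment ℝ x (x + s)))
    (h1 : ⟪s, gradient f x + (fderiv ℝ (gradient f) x s + lm • s)⟫_ℝ ≤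
      (1/2) * ⟪s, fderiv ℝ (gradient f) x s + lm • s⟫_ℝ + (1/2) * κ₂ * ‖s‖ ^ 3)
    (h2 : lm ≥ (HLip + κ₂ + 2 * η) * ‖s‖) :
    f x - f (x + s) ≥ η * ‖s‖ ^ 3 := by
  have hsn : 0 < ‖s‖ := norm_pos_iff.mpr hs
  set g := gradient f x with hg
  set H := fderiv ℝ (gradient f) x with hH
  have hgrad : ContDiff ℝ 1 (gradient f) := by
    have h1' : ContDiff ℝ 1 (fderiv ℝ f) := hf.fderiv_right (by norm_num)
    exact ((InnerProductSpace.toDual ℝ _).symm.contDiff).comp h1'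
  have hgd : Differentiable ℝ (gradient f) := hgrad.differentiable one_ne_zero
  have hfd : Differentiable ℝ f := hf.differentiable two_ne_zero
  have hconv : Convex ℝ (segment ℝ x (x + s)) := convex_segment _ _
  -- membership facts
  have hmem : ∀ t : ℝ, t ∈ Set.Icc (0:ℝ) 1 → x + t • s ∈ segment ℝ x (x + s) := by
    intro t ht
    rw [segment_eq_image' ℝ x (x + s)]
    exact ⟨t, ht, by simp⟩
  have hxmem : x ∈ segment ℝ x (x + s) := left_mem_segment _ _ _
  -- Lipschitz bound on fderiv of gradient over segment
  have hbound : ∀ z ∈ segment ℝ x (x + s), ‖fderiv ℝ (gradient f) z - H‖ ≤ HLip * ‖s‖ := by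
    intro z hz
    have hd := hlip.dist_le_mul z hz x hxmem
    rw [dist_eq_norm] at hd
    have hc : (HLip.toNNReal : ℝ) = HLip := Real.coe_toNNReal _ hHLip.le
    have hzx : ‖z - x‖ ≤ ‖s‖ := by
      rw [segment_eq_image' ℝ x (x + s)] at hz
      obtain ⟨u, hu, rfl⟩ := hz
      have : x + u • (x + s - x) - x = u • s := by
        simp
      rw [this, norm_smul]
      calc ‖u‖ * ‖s‖ ≤ 1 * ‖s‖ := by
            apply mul_le_mul_of_nonneg_right _ (norm_nonneg s)
            rw [Real.norm_eq_abs, abs_le]; exact ⟨by linarith [hu.1], hu.2⟩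
        _ = ‖s‖ := one_mul _
    rw [dist_eq_norm, hc] at hd
    exact le_trans hd (mul_le_mul_of_nonneg_left hzx hHLip.le)
  -- gradient error bound
  have key : ∀ t : ℝ, t ∈ Set.Icc (0:ℝ) 1 →
      ‖gradient f (x + t • s) - g - t • H s‖ ≤ HLip * ‖s‖ * (t * ‖s‖) := by
    intro t ht
    have := hconv.norm_image_sub_le_of_norm_fderiv_le' (f := gradient f) (φ := H)
      (C := HLip * ‖s‖)
      (fun z _ => hgd z) hbound hxmem (hmem t ht)
    have hxx : x + t • s - x = t • s := by abel
    rw [hxx] at this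
    calc ‖gradient f (x + t • s) - g - t • H s‖
        = ‖gradient f (x + t • s) - gradient f x - H (t • s)‖ := by
          rw [map_smul]
      _ ≤ HLip * ‖s‖ * ‖t • s‖ := this
      _ ≤ HLip * ‖s‖ * (t * ‖s‖) := by
          rw [norm_smul, Real.norm_eq_abs, abs_of_nonneg ht.1]
  -- the auxiliary 1-D function
  set ψ : ℝ → ℝ := fun t => f (x + t • s) - t * ⟪s, g⟫_ℝ - t^2/2 * ⟪s, H s⟫_ℝ
      - t^2/2 * (HLip * ‖s‖^3) with hψ
  have hψd : ∀ t : ℝ, HasDerivAt ψ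
      (⟪gradient f (x + t • s), s⟫_ℝ - ⟪s, g⟫_ℝ - t * ⟪s, H s⟫_ℝ - t * (HLip * ‖s‖^3)) t := by
    intro t
    have hline : HasDerivAt (fun t : ℝ => x + t • s) s t := by
      simpa using ((hasDerivAt_id t).smul_const s).const_add x
    have h3 : HasFDerivAt f (InnerProductSpace.toDual ℝ _ (gradient f (x + t • s)))
        (x + t • s) := (hfd (x + t • s)).hasGradientAt.hasFDerivAt
    have hφ : HasDerivAt (fun t : ℝ => f (x + t • s)) (⟪gradient f (x + t • s), s⟫_ℝ) t := by
      have h4 := h3.comp_hasDerivAt t hline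
      rw [InnerProductSpace.toDual_apply_apply] at h4
      exact h4
    have ha : HasDerivAt (fun t : ℝ => t * ⟪s, g⟫_ℝ) (⟪s, g⟫_ℝ) t := by
      simpa using (hasDerivAt_id t).mul_const (⟪s, g⟫_ℝ)
    have hb : HasDerivAt (fun t : ℝ => t^2/2 * ⟪s, H s⟫_ℝ) (t * ⟪s, H s⟫_ℝ) t := by
      have := ((hasDerivAt_pow 2 t).div_const 2).mul_const (⟪s, H s⟫_ℝ)
      exact this.congr_deriv (by norm_num)
    have hcℝ : HasDerivAt (fun t : ℝ => t^2/2 * (HLip * ‖s‖^3)) (t * (HLip * ‖s‖^3)) t := by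
      have := ((hasDerivAt_pow 2 t).div_const 2).mul_const (HLip * ‖s‖^3)
      exact this.congr_deriv (by norm_num)
    exact ((hφ.sub ha).sub hb).sub hcℝ
  have hψd' : Differentiable ℝ ψ := fun t => (hψd t).differentiableAt
  -- derivative nonpositive on (0,1)
  have hmono : AntitoneOn ψ (Set.Icc 0 1) := by
    apply antitoneOn_of_deriv_nonpos (convex_Icc 0 1) (hψd'.continuous.continuousOn)
      (fun t _ => (hψd'.differentiableAt).differentiableWithinAt)
    intro t ht
    rw [interior_Icc] at ht
    rw [(hψd t).deriv]
    have htI : t ∈ Set.Icc (0:ℝ) 1 := ⟨ht.1.le, ht.2.le⟩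
    have hk := key t htI
    have hinner : ⟪gradient f (x + t • s), s⟫_ℝ - ⟪s, g⟫_ℝ - t * ⟪s, H s⟫_ℝ
        = ⟪gradient f (x + t • s) - g - t • H s, s⟫_ℝ := by
      rw [inner_sub_left, inner_sub_left, real_inner_smul_left,
        real_inner_comm g s, real_inner_comm (H s) s]
    have hle : ⟪gradient f (x + t • s) - g - t • H s, s⟫_ℝ ≤ HLip * ‖s‖ * (t * ‖s‖) * ‖s‖ :=
      le_trans (real_inner_le_norm _ _) (mul_le_mul_of_nonneg_right hk (norm_nonneg s))
    nlinarith [norm_nonneg s, ht.1]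
  have hfinal := hmono (Set.left_mem_Icc.mpr zero_le_one) (Set.right_mem_Icc.mpr zero_le_one)
    zero_le_one
  have hψ0 : ψ 0 = f x := by simp [hψ]
  have hψ1 : ψ 1 = f (x + s) - ⟪s, g⟫_ℝ - 1/2 * ⟪s, H s⟫_ℝ - 1/2 * (HLip * ‖s‖^3) := by
    simp [hψ]
  rw [hψ0, hψ1] at hfinal
  -- expand h1
  have h1' : ⟪s, g⟫_ℝ + ⟪s, H s⟫_ℝ + lm * ‖s‖^2 ≤
      1/2 * ⟪s, H s⟫_ℝ + 1/2 * (lm * ‖s‖^2) + 1/2 * κ₂ * ‖s‖^3 := by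
    have e1 : ⟪s, g + (H s + lm • s)⟫_ℝ = ⟪s, g⟫_ℝ + ⟪s, H s⟫_ℝ + lm * ‖s‖^2 := by
      rw [inner_add_right, inner_add_right, real_inner_smul_right,
        real_inner_self_eq_norm_sq]; ring
    have e2 : ⟪s, H s + lm • s⟫_ℝ = ⟪s, H s⟫_ℝ + lm * ‖s‖^2 := by
      rw [inner_add_right, real_inner_smul_right, real_inner_self_eq_norm_sq]
    rw [e1, e2] at h1
    linarith [h1]
  have hs3 : ‖s‖^3 = ‖s‖^2 * ‖s‖ := by ring
  have hlm' : lm * ‖s‖^2 ≥ (HLip + κ₂ + 2 * η) * ‖s‖^3 := by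
    calc lm * ‖s‖^2 ≥ ((HLip + κ₂ + 2*η) * ‖s‖) * ‖s‖^2 := by
          apply mul_le_mul_of_nonneg_right h2 (by positivity)
      _ = (HLip + κ₂ + 2*η) * ‖s‖^3 := by ring
  nlinarith [hfinal, h1', hlm', sq_nonneg (‖s‖), pow_pos hsn 3]
end

section
/- Let $f : \mathbb{R}^n \to \mathbb{R}$ be twice continuously differentiable with Hessian Lipschitz constant $H_{Lip} > 0$ on the segment $[x, x+s]$. Let $g = \nabla f(x)$, $H = \nabla^2 f(x)$, $\lambda \geq 0$, and $\kappa_3, \sigma > 0$. If $\|g + (H + \lambda I)s\| \leq \lambda\|s\| + \kappa_3\|s\|^2$ and $\lambda \leq \sigma \|s\|$, then $\|\nabla f(x+s)\| \leq (\tfrac12 H_{Lip} + 2\sigma + \kappa_3)\|s\|^2$. -/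
open scoped InnerProductSpace

theorem stmt_4 {n : ℕ} (f : EuclideanSpace ℝ (Fin n) → ℝ)
    (x s : EuclideanSpace ℝ (Fin n)) (HLip lm κ₃ σ : ℝ)
    (hHLip : 0 < HLip) (hlm : 0 ≤ lm) (hκ₃ : 0 < κ₃) (hσ : 0 < σ)
    (hf : ContDiff ℝ 2 f)
    (hlip : LipschitzOnWith HLip.toNNReal (fun y => fderiv ℝ (gradient f) y)
      (segment ℝ x (x + s)))
    (h1 : ‖gradient f x + (fderiv ℝ (gradient f) x s + lm • s)‖ ≤ lm * ‖s‖ + κ₃ * ‖s‖ ^ 2)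
    (h2 : lm ≤ σ * ‖s‖) :
    ‖gradient f (x + s)‖ ≤ ((1/2) * HLip + 2 * σ + κ₃) * ‖s‖ ^ 2 := by
  set G := gradient f with hG
  -- G is C¹
  have hG1 : ContDiff ℝ 1 G := by
    have hfd : ContDiff ℝ 1 (fderiv ℝ f) := hf.fderiv_right (by norm_num)
    exact ((InnerProductSpace.toDual ℝ (EuclideanSpace ℝ (Fin n))).symm.contDiff.comp hfd)
  have hGdiff : Differentiable ℝ G := hG1.differentiable one_ne_zero
  -- membership in the segment
  have hmem : ∀ t ∈ Set.Icc (0:ℝ) 1, x + t • s ∈ segment ℝ x (x + s) := by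
    intro t ht
    rw [segment_eq_image' (𝕜 := ℝ) x (x + s)]
    exact ⟨t, ht, by simp⟩
  -- the auxiliary function
  set ψ : ℝ → EuclideanSpace ℝ (Fin n) := fun t => G (x + t • s) - G x - t • (fderiv ℝ G x s) with hψ
  have hψ' : ∀ t ∈ Set.Icc (0:ℝ) 1, HasDerivWithinAt ψ
      (fderiv ℝ G (x + t • s) s - fderiv ℝ G x s) (Set.Icc (0:ℝ) 1) t := by
    intro t ht
    have h0 : HasDerivAt (fun t : ℝ => x + t • s) s t := by
      simpa using ((hasDerivAt_id t).smul_const s).const_add x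
    have h1 : HasDerivAt (fun t : ℝ => G (x + t • s)) (fderiv ℝ G (x + t • s) s) t :=
      by have := (hGdiff (x + t • s)).hasFDerivAt.comp_hasDerivAt t h0; exact this
    have h2 : HasDerivAt ψ (fderiv ℝ G (x + t • s) s - fderiv ℝ G x s) t := by
      have h3 := (h1.sub_const (G x)).sub ((hasDerivAt_id t).smul_const (fderiv ℝ G x s))
      simp only [one_smul] at h3
      exact h3
    exact h2.hasDerivWithinAt
  have hbound : ∀ t ∈ Set.Ico (0:ℝ) 1,
      ‖fderiv ℝ G (x + t • s) s - fderiv ℝ G x s‖ ≤ (HLip * ‖s‖ ^ 2) * t := by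
    intro t ht
    have hmem' := hmem t ⟨ht.1, ht.2.le⟩
    have hx0 : x ∈ segment ℝ x (x + s) := left_mem_segment ℝ x (x + s)
    have hdist : (dist (fderiv ℝ G (x + t • s)) (fderiv ℝ G x) : ℝ)
        ≤ HLip * dist (x + t • s) x := by
      have := hlip.dist_le_mul _ hmem' _ hx0
      simpa [Real.coe_toNNReal _ hHLip.le] using this
    have hds : dist (x + t • s) x = t * ‖s‖ := by
      simp [dist_eq_norm, norm_smul, abs_of_nonneg ht.1]
    calc ‖fderiv ℝ G (x + t • s) s - fderiv ℝ G x s‖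
        = ‖(fderiv ℝ G (x + t • s) - fderiv ℝ G x) s‖ := by simp
      _ ≤ ‖fderiv ℝ G (x + t • s) - fderiv ℝ G x‖ * ‖s‖ :=
          (fderiv ℝ G (x + t • s) - fderiv ℝ G x).le_opNorm s
      _ ≤ (HLip * (t * ‖s‖)) * ‖s‖ := by
          apply mul_le_mul_of_nonneg_right _ (norm_nonneg s)
          calc ‖fderiv ℝ G (x + t • s) - fderiv ℝ G x‖
              = dist (fderiv ℝ G (x + t • s)) (fderiv ℝ G x) := (dist_eq_norm _ _).symm
            _ ≤ HLip * dist (x + t • s) x := hdist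
            _ = HLip * (t * ‖s‖) := by rw [hds]
      _ = (HLip * ‖s‖ ^ 2) * t := by ring
  -- the fencing theorem with B t = (HLip * ‖s‖^2 / 2) * t^2
  have hB : ∀ t : ℝ, HasDerivAt (fun t => (HLip * ‖s‖ ^ 2 / 2) * t ^ 2)
      ((HLip * ‖s‖ ^ 2) * t) t := by
    intro t
    have := ((hasDerivAt_pow 2 t).const_mul (HLip * ‖s‖ ^ 2 / 2))
    simpa using this.congr_deriv (by ring)
  have key : ‖ψ 1‖ ≤ HLip * ‖s‖ ^ 2 / 2 * 1 ^ 2 := by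
    apply image_norm_le_of_norm_deriv_right_le_deriv_boundary
      (f := ψ) (f' := fun t => fderiv ℝ G (x + t • s) s - fderiv ℝ G x s)
      (a := 0) (b := 1)
      (fun t ht => (hψ' t ht).continuousWithinAt)
      (fun t ht => ((hψ' t ⟨ht.1, ht.2.le⟩).mono_of_mem_nhdsWithin
        (Icc_mem_nhdsGE_of_mem ht)))
      (by simp [hψ]) hB hbound
    exact ⟨zero_le_one, le_rfl⟩
  have hψ1 : ψ 1 = G (x + s) - G x - fderiv ℝ G x s := by simp [hψ]
  -- assemble
  have hdecomp : G (x + s) = ψ 1 + (G x + (fderiv ℝ G x s + lm • s)) - lm • s := by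
    rw [hψ1]; abel
  have hσs : lm * ‖s‖ ≤ σ * ‖s‖ ^ 2 := by
    have := mul_le_mul_of_nonneg_right h2 (norm_nonneg s)
    calc lm * ‖s‖ ≤ σ * ‖s‖ * ‖s‖ := this
      _ = σ * ‖s‖ ^ 2 := by ring
  have hlmnorm : ‖lm • s‖ ≤ σ * ‖s‖ ^ 2 := by
    rw [norm_smul, Real.norm_eq_abs, abs_of_nonneg hlm]; exact hσs
  calc ‖G (x + s)‖ = ‖ψ 1 + (G x + (fderiv ℝ G x s + lm • s)) - lm • s‖ := by rw [hdecomp]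
    _ ≤ ‖ψ 1 + (G x + (fderiv ℝ G x s + lm • s))‖ + ‖lm • s‖ := norm_sub_le _ _
    _ ≤ ‖ψ 1‖ + ‖G x + (fderiv ℝ G x s + lm • s)‖ + ‖lm • s‖ := by
        gcongr; exact norm_add_le _ _
    _ ≤ HLip * ‖s‖ ^ 2 / 2 * 1 ^ 2 + (lm * ‖s‖ + κ₃ * ‖s‖ ^ 2) + σ * ‖s‖ ^ 2 := by
        gcongr
    _ ≤ HLip * ‖s‖ ^ 2 / 2 + (σ * ‖s‖ ^ 2 + κ₃ * ‖s‖ ^ 2) + σ * ‖s‖ ^ 2 := by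
        rw [one_pow, mul_one]; gcongr
    _ = ((1/2) * HLip + 2 * σ + κ₃) * ‖s‖ ^ 2 := by ring
end

section
/- Consider the optimization problem of minimizing $\phi(s,\lambda) = f + g^T s + \tfrac12 s^T (H + \lambda I) s$ over $(s, \lambda) \in \mathbb{R}^n \times \mathbb{R}_{\geq 0}$ subject to $(\sigma_L)^2\|s\|^2 \leq \lambda^2 \leq (\sigma_U)^2\|s\|^2$, with $0 < \sigma_L \leq \sigma_U$ and $g \neq 0$. Then any KKT point $(s_k, \lambda_k, \beta^L_k, \beta^U_k, \beta^N_k)$ of this problem (with Lagrangian as in the paper) satisfies $\lambda_k > 0$, $\beta^N_k = 0$, $\beta^L_k > 0$, and $\lambda_k = \sigma_L \|s_k\|$. -/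
open scoped InnerProductSpace

theorem stmt_10 {n : ℕ} (g s : EuclideanSpace ℝ (Fin n)) (hg : g ≠ 0)
    (H : EuclideanSpace ℝ (Fin n) →L[ℝ] EuclideanSpace ℝ (Fin n))
    (hH : IsSelfAdjoint H) (σL σU lm βL βU βN : ℝ)
    (hσL : 0 < σL) (hσLU : σL ≤ σU) (hlm : 0 ≤ lm)
    (kkt1 : g + (H s + lm • s) + (βL * σL ^ 2) • s - (βU * σU ^ 2) • s = 0)
    (kkt2 : (1/2) * ‖s‖ ^ 2 - lm * (βL - βU) - βN = 0)
    (kkt3 : 0 ≤ βL ∧ 0 ≤ lm ^ 2 - σL ^ 2 * ‖s‖ ^ 2 ∧ βL * (lm ^ 2 - σL ^ 2 * ‖s‖ ^ 2) = 0)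
    (kkt4 : 0 ≤ βU ∧ lm ^ 2 - σU ^ 2 * ‖s‖ ^ 2 ≤ 0 ∧ βU * (lm ^ 2 - σU ^ 2 * ‖s‖ ^ 2) = 0)
    (kkt5 : 0 ≤ βN ∧ βN * lm = 0) :
    0 < lm ∧ βN = 0 ∧ 0 < βL ∧ lm = σL * ‖s‖ := by
  have hs : s ≠ 0 := by
    intro h; subst h
    simp at kkt1
    exact hg kkt1
  have hsn : 0 < ‖s‖ := norm_pos_iff.mpr hs
  have h1 : 0 < σL ^ 2 * ‖s‖ ^ 2 := by positivity
  have hlm2 : 0 < lm ^ 2 := lt_of_lt_of_le h1 (by linarith [kkt3.2.1])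
  have hlmpos : 0 < lm := by
    rcases hlm.lt_or_eq with h | h
    · exact h
    · exfalso; rw [← h] at hlm2; simp at hlm2
  have hβN : βN = 0 := by
    rcases mul_eq_zero.mp kkt5.2 with h | h
    · exact h
    · linarith
  have hβL : 0 < βL := by
    by_contra hβ
    push_neg at hβ
    have hd : βL - βU ≤ 0 := by linarith [kkt4.1]
    nlinarith [mul_nonpos_of_nonneg_of_nonpos hlmpos.le hd, sq_nonneg ‖s‖]
  have heq : lm ^ 2 = (σL * ‖s‖) ^ 2 := by
    rcases mul_eq_zero.mp kkt3.2.2 with h | h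
    · linarith
    · rw [mul_pow]; linarith
  have hfin : lm = σL * ‖s‖ := by
    have h2 : 0 ≤ σL * ‖s‖ := by positivity
    nlinarith [sq_nonneg (lm - σL * ‖s‖), sq_nonneg (lm + σL * ‖s‖)]
  exact ⟨hlmpos, hβN, hβL, hfin⟩
end

section
/- Consider the KKT conditions for minimizing $f + g^T s + \tfrac12 s^T(H + \lambda I)s$ over $(s,\lambda) \in \mathbb{R}^n \times \mathbb{R}_{\geq 0}$ subject to $0 \leq \lambda^2 \leq \sigma_U^2\|s\|^2$ (i.e., the lower ratio bound is $\sigma_L = 0$), with $g \neq 0$. Then any KKT point has $\lambda_k = 0$. -/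
open scoped InnerProductSpace

theorem stmt_11 {n : ℕ} (g s : EuclideanSpace ℝ (Fin n)) (hg : g ≠ 0)
    (H : EuclideanSpace ℝ (Fin n) →L[ℝ] EuclideanSpace ℝ (Fin n))
    (hH : IsSelfAdjoint H) (σU lm βL βU βN : ℝ)
    (hσU : 0 < σU) (hlm : 0 ≤ lm)
    (kkt1 : g + (H s + lm • s) - (βU * σU ^ 2) • s = 0)
    (kkt2 : (1/2) * ‖s‖ ^ 2 - lm * (βL - βU) - βN = 0)
    (kkt3 : 0 ≤ βL ∧ 0 ≤ lm ^ 2 ∧ βL * lm ^ 2 = 0)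
    (kkt4 : 0 ≤ βU ∧ lm ^ 2 - σU ^ 2 * ‖s‖ ^ 2 ≤ 0 ∧ βU * (lm ^ 2 - σU ^ 2 * ‖s‖ ^ 2) = 0)
    (kkt5 : 0 ≤ βN ∧ βN * lm = 0) :
    lm = 0 := by
  by_contra h
  have hlm' : 0 < lm := lt_of_le_of_ne hlm (Ne.symm h)
  have hβN : βN = 0 := by
    rcases mul_eq_zero.mp kkt5.2 with h1 | h1
    · exact h1
    · exact absurd h1 (ne_of_gt hlm')
  have hβL : βL = 0 := by
    rcases mul_eq_zero.mp kkt3.2.2 with h1 | h1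
    · exact h1
    · exact absurd h1 (by positivity)
  rw [hβN, hβL] at kkt2
  have hs : ‖s‖ ^ 2 = 0 := by
    nlinarith [sq_nonneg ‖s‖, kkt4.1]
  have hs0 : s = 0 := by
    have := pow_eq_zero_iff (n := 2) (by norm_num) |>.mp hs
    simpa using this
  rw [hs0] at kkt1
  simp at kkt1
  exact hg kkt1
end
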